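/- For the single-delay characteristic equation λ + ηae^{-λτ} = 0 with η, a, τ > 0, if ηaτ < 1 then every root satisfies Re(λ) < 0. -/
import Mathlib

open Complex

/-- Single delay: if ηaτ < 1, every root of λ + ηae^{-λτ} = 0 has negative real part. -/
theorem single_delay_roots_left_half_plane (η a τ : ℝ) (hη : 0 < η) (ha : 0 < a)
    (hτ : 0 < τ) (hcond : η * a * τ < 1) :
    ∀ l : ℂ, l + (η * a : ℂ) * Complex.exp (-l * τ) = 0 → l.re < 0 := by
  intro l hl
  by_contra hx
  push_neg at hx
  set b := η * a with hb
  have hbpos : 0 < b := mul_pos hη ha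
  have heq : l = -((b : ℂ) * Complex.exp (-l * ↑τ)) := by
    rw [hb]; push_cast
    linear_combination hl
  have h1 := congrArg Complex.re heq
  have h2 := congrArg Complex.im heq
  simp [Complex.exp_re, Complex.exp_im, Complex.mul_re, Complex.mul_im] at h1 h2
  set e := Real.exp (-(l.re * τ)) with he
  have hepos : 0 < e := Real.exp_pos _
  have hele : e ≤ 1 := Real.exp_le_one_iff.mpr (by nlinarith)
  have hs1 : Real.sin (l.im * τ) ≤ 1 := Real.sin_le_one _
  have hs2 : -1 ≤ Real.sin (l.im * τ) := Real.neg_one_le_sin _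
  have him1 : l.im ≤ b := by nlinarith [mul_pos hbpos hepos]
  have him2 : -b ≤ l.im := by nlinarith [mul_pos hbpos hepos]
  have harg1 : l.im * τ < Real.pi / 2 := by nlinarith [Real.pi_gt_three]
  have harg2 : -(Real.pi / 2) < l.im * τ := by nlinarith [Real.pi_gt_three]
  have hcos : 0 < Real.cos (l.im * τ) := Real.cos_pos_of_mem_Ioo ⟨harg2, harg1⟩
  nlinarith [mul_pos hbpos (mul_pos hepos hcos)]
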